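/- For every alternating Büchi automaton A with n states there exists a nondeterministic Büchi automaton B with at most 2^(O(n)) states (e.g. 3^n states via the Miyano–Hayashi construction) such that B accepts exactly the same ω-language as A. -/

import Mathlib

/-- Positive Boolean formulas over a set of states. -/
inductive PosBool (Q : Type) where
  | tt : PosBool Q
  | ff : PosBool Q
  | var (q : Q) : PosBool Q
  | and (a b : PosBool Q) : PosBool Q
  | or (a b : PosBool Q) : PosBool Q

/-- Satisfaction of a positive Boolean formula by a valuation (set of states made true). -/
def PosBool.Sat {Q : Type} (v : Set Q) : PosBool Q → Prop
  | .tt => True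
  | .ff => False
  | .var q => q ∈ v
  | .and a b => a.Sat v ∧ b.Sat v
  | .or a b => a.Sat v ∨ b.Sat v

/-- An alternating Büchi automaton. -/
structure ABA (A : Type) where
  Q : Type
  fin : Fintype Q
  q0 : Q
  δ : Q → A → PosBool Q
  F : Set Q

/-- A run tree of an ABA on an infinite word: a prefix-closed set of tree nodes
labelled by states, with root labelled by the initial state, such that at every node the
valuation making exactly the labels of its children true satisfies the transition formula. -/
structure ABA.Run {A : Type} (M : ABA A) (w : ℕ → A) where
  T : Set (List ℕ)
  r : List ℕ → M.Q
  root_mem : [] ∈ T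
  root_label : r [] = M.q0
  prefix_closed : ∀ t n, t ++ [n] ∈ T → t ∈ T
  trans : ∀ t ∈ T, (M.δ (r t) (w t.length)).Sat {q | ∃ n, t ++ [n] ∈ T ∧ r (t ++ [n]) = q}

/-- A run is accepting iff every infinite branch visits accepting states infinitely often. -/
def ABA.Run.Accepting {A : Type} {M : ABA A} {w : ℕ → A} (ρ : M.Run w) : Prop :=
  ∀ f : ℕ → List ℕ, f 0 = [] → (∀ k, f k ∈ ρ.T ∧ ∃ n, f (k + 1) = f k ++ [n]) →
    ∀ N, ∃ k ≥ N, ρ.r (f k) ∈ M.F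

/-- The ω-language of an ABA. -/
def ABA.Lang {A : Type} (M : ABA A) : Set (ℕ → A) := {w | ∃ ρ : M.Run w, ρ.Accepting}

/-- Transition formulas that are pure disjunctions (of states, possibly empty/false). -/
def PosBool.IsDisj {Q : Type} : PosBool Q → Prop
  | .var _ => True
  | .ff => True
  | .or a b => a.IsDisj ∧ b.IsDisj
  | _ => False

/-- A nondeterministic Büchi automaton is an ABA whose transitions are pure disjunctions. -/
def ABA.IsNondet {A : Type} (M : ABA A) : Prop := ∀ q a, (M.δ q a).IsDisj

namespace MH

open scoped Classical

attribute [local instance] ABA.fin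

/-- Monotonicity of satisfaction. -/
theorem PosBool.sat_mono {Q : Type} {v v' : Set Q} (h : v ⊆ v') :
    ∀ {f : PosBool Q}, f.Sat v → f.Sat v'
  | .tt, _ => trivial
  | .ff, hf => hf.elim
  | .var q, hq => h hq
  | .and a b, ⟨ha, hb⟩ => ⟨PosBool.sat_mono h ha, PosBool.sat_mono h hb⟩
  | .or a b, hab => hab.elim (fun ha => Or.inl (PosBool.sat_mono h ha))
      (fun hb => Or.inr (PosBool.sat_mono h hb))

/-- Disjunction of a list of variables. -/
def orAll {Q : Type} : List Q → PosBool Q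
  | [] => .ff
  | q :: l => .or (.var q) (orAll l)

theorem orAll_isDisj {Q : Type} : ∀ l : List Q, (orAll l).IsDisj
  | [] => trivial
  | _ :: l => ⟨trivial, orAll_isDisj l⟩

theorem sat_orAll {Q : Type} {v : Set Q} : ∀ {l : List Q},
    (orAll l).Sat v ↔ ∃ q ∈ l, q ∈ v
  | [] => by simp [orAll, PosBool.Sat]
  | q :: l => by
      simp only [orAll, PosBool.Sat, sat_orAll (l := l), List.mem_cons]
      constructor
      · rintro (h | ⟨x, hx, hv⟩)
        · exact ⟨q, Or.inl rfl, h⟩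
        · exact ⟨x, Or.inr hx, hv⟩
      · rintro ⟨x, (rfl | hx), hv⟩
        · exact Or.inl hv
        · exact Or.inr ⟨x, hx, hv⟩

variable {A : Type} (M : ABA A)

/-- The state space of the Miyano–Hayashi automaton: `0` = not present,
`1` = present without obligation, `2` = present with obligation. -/
def MHQ : Type := M.Q → Fin 3

noncomputable instance : Fintype (MHQ M) := by unfold MHQ; infer_instance

/-- The set `S` of present states. -/
def Sf (f : MHQ M) : Set M.Q := {q | f q ≠ 0}

/-- The set `O` of obligated states. -/
def Of (f : MHQ M) : Set M.Q := {q | f q = 2}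

/-- Encode a pair of sets as a state. -/
noncomputable def enc (S O : Set M.Q) : MHQ M :=
  fun q => if q ∈ O then 2 else if q ∈ S then 1 else 0

theorem Of_enc (S O : Set M.Q) : Of M (enc M S O) = O := by
  ext q; simp only [Of, enc, Set.mem_setOf_eq]
  by_cases h : q ∈ O <;> by_cases h' : q ∈ S <;> simp [h, h']

theorem Sf_enc {S O : Set M.Q} (h : O ⊆ S) : Sf M (enc M S O) = S := by
  ext q; simp only [Sf, enc, Set.mem_setOf_eq]
  by_cases hO : q ∈ O <;> by_cases hS : q ∈ S <;> simp [hO, hS]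
  exact absurd (h hO) hS

theorem Of_subset_Sf (f : MHQ M) : Of M f ⊆ Sf M f := by
  intro q hq
  simp only [Of, Set.mem_setOf_eq] at hq
  simp [Sf, hq]

/-- The transition relation of the Miyano–Hayashi automaton. -/
def Step (a : A) (f g : MHQ M) : Prop :=
  (∀ q ∈ Sf M f, ∃ Y, Y ⊆ Sf M g ∧ (M.δ q a).Sat Y ∧ (q ∈ Of M f → Y \ M.F ⊆ Of M g)) ∧
  (Of M f = ∅ → Of M g = Sf M g \ M.F)

/-- The Miyano–Hayashi automaton. -/
noncomputable def MHaut : ABA A where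
  Q := MHQ M
  fin := inferInstance
  q0 := enc M {M.q0} ({M.q0} \ M.F)
  δ := fun f a => orAll (Finset.univ.filter (fun g => Step M a f g)).toList
  F := {f | Of M f = ∅}

theorem mh_nondet : (MHaut M).IsNondet := fun _ _ => orAll_isDisj _

theorem mh_card : (@Fintype.card (MHaut M).Q (MHaut M).fin) ≤
    3 ^ (@Fintype.card M.Q M.fin) := by
  have h1 : (@Fintype.card (MHaut M).Q (MHaut M).fin) = Fintype.card (MHQ M) := by
    congr 1
  rw [h1]
  have : Fintype.card (MHQ M) = Fintype.card (M.Q → Fin 3) := by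
    congr 1
  rw [this, Fintype.card_fun]
  simp

theorem mh_sat_iff (f : MHQ M) (a : A) (v : Set (MHQ M)) :
    ((MHaut M).δ f a).Sat v ↔ ∃ g ∈ v, Step M a f g := by
  show (orAll _).Sat v ↔ _
  rw [sat_orAll]
  constructor
  · rintro ⟨g, hg, hv⟩
    rw [Finset.mem_toList, Finset.mem_filter] at hg
    exact ⟨g, hv, hg.2⟩
  · rintro ⟨g, hv, hstep⟩
    exact ⟨g, by rw [Finset.mem_toList, Finset.mem_filter]; exact ⟨Finset.mem_univ _, hstep⟩, hv⟩

end MH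
namespace MH

theorem concat_prefix_concat {α : Type*} {l t : List α} {a b : α} (h : l ++ [a] <+: t ++ [b]) :
    l ++ [a] <+: t ∨ (l = t ∧ a = b) := by
  rcases h with ⟨s, hs⟩
  rcases s.eq_nil_or_concat with rfl | ⟨s', c, rfl⟩
  · rw [List.append_nil] at hs
    obtain ⟨h1, h2⟩ := List.append_inj' hs rfl
    exact Or.inr ⟨h1, by simpa using h2⟩
  · left
    rw [List.concat_eq_append, ← List.append_assoc] at hs
    obtain ⟨h1, -⟩ := List.append_inj' hs rfl
    exact h1 ▸ List.prefix_append _ _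

theorem mh_sound {A : Type} (M : ABA A) (w : ℕ → A) (h : w ∈ (MHaut M).Lang) :
    w ∈ M.Lang := by
  classical
  letI := M.fin
  obtain ⟨ρ, hacc⟩ := h
  -- every node of the run tree of the MH automaton has a child, related by `Step`
  have key : ∀ t, t ∈ ρ.T →
      ∃ n, t ++ [n] ∈ ρ.T ∧ Step M (w t.length) (ρ.r t) (ρ.r (t ++ [n])) := by
    intro t ht
    have h := ρ.trans t ht
    replace h := (mh_sat_iff M _ _ _).mp h
    obtain ⟨g, ⟨n, hmem, hlab⟩, hstep⟩ := h
    exact ⟨n, hmem, by rw [hlab]; exact hstep⟩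
  choose nx hmem hstep using key
  -- an infinite branch of the MH run tree
  let Fn : {t // t ∈ ρ.T} → {t // t ∈ ρ.T} :=
    fun s => ⟨s.val ++ [nx s.val s.prop], hmem s.val s.prop⟩
  let gb : ℕ → {t // t ∈ ρ.T} := fun k => Fn^[k] ⟨[], ρ.root_mem⟩
  have gb_succ : ∀ k, gb (k+1) = Fn (gb k) := fun k => Function.iterate_succ_apply' Fn k _
  have gb_len : ∀ k, (gb k).val.length = k := by
    intro k; induction k with
    | zero => rfl
    | succ k ih => rw [gb_succ]; simp only [Fn, List.length_append, ih, List.length_cons,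
        List.length_nil]
  let St : ℕ → MHQ M := fun k => ρ.r (gb k).val
  have hstep' : ∀ k, Step M (w k) (St k) (St (k+1)) := by
    intro k
    have h2 := hstep (gb k).val (gb k).prop
    rw [gb_len k] at h2
    show Step M (w k) (ρ.r (gb k).val) (ρ.r (gb (k+1)).val)
    rw [gb_succ]; exact h2
  have hbrk : ∀ N, ∃ k ≥ N, Of M (St k) = ∅ := by
    intro N
    have hb := hacc (fun k => (gb k).val) rfl
      (fun k => ⟨(gb k).prop, ⟨nx (gb k).val (gb k).prop, by show (gb (k+1)).val = _; rw [gb_succ]⟩⟩) N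
    obtain ⟨k, hk, hF⟩ := hb
    exact ⟨k, hk, hF⟩
  have hS0 : Sf M (St 0) = {M.q0} := by
    show Sf M (ρ.r []) = _
    rw [ρ.root_label]
    exact Sf_enc M Set.diff_subset
  -- choice of successor sets
  have ychoice : ∀ k q, q ∈ Sf M (St k) → ∃ Y, Y ⊆ Sf M (St (k+1)) ∧
      (M.δ q (w k)).Sat Y ∧ (q ∈ Of M (St k) → Y \ M.F ⊆ Of M (St (k+1))) :=
    fun k q hq => (hstep' k).1 q hq
  choose Yc hY1 hY2 hY3 using ychoice
  let Y' : ℕ → M.Q → Set M.Q := fun k q => if h : q ∈ Sf M (St k) then Yc k q h else ∅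
  have hY'1 : ∀ k q (h : q ∈ Sf M (St k)), Y' k q ⊆ Sf M (St (k+1)) := by
    intro k q h; show (dite _ _ _ : Set M.Q) ⊆ _; rw [dif_pos h]; exact hY1 k q h
  have hY'2 : ∀ k q (h : q ∈ Sf M (St k)), (M.δ q (w k)).Sat (Y' k q) := by
    intro k q h; show (M.δ q (w k)).Sat (dite _ _ _); rw [dif_pos h]; exact hY2 k q h
  have hY'3 : ∀ k q (h : q ∈ Sf M (St k)), q ∈ Of M (St k) → Y' k q \ M.F ⊆ Of M (St (k+1)) := by
    intro k q h; show _ → (dite _ _ _ : Set M.Q) \ _ ⊆ _; rw [dif_pos h]; exact hY3 k q h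
  -- encoding states as natural numbers
  let e : M.Q ≃ Fin (Fintype.card M.Q) := Fintype.equivFin M.Q
  let encv : M.Q → ℕ := fun q => (e q).val
  let dec : ℕ → M.Q := fun m => if h : m < Fintype.card M.Q then e.symm ⟨m, h⟩ else M.q0
  have dec_enc : ∀ q, dec (encv q) = q := by
    intro q; show dite _ _ _ = q; rw [dif_pos (e q).isLt]; simp [encv]
  -- the run tree for M
  let r' : List ℕ → M.Q := fun t => match t.getLast? with
    | none => M.q0
    | some m => dec m
  have r'_nil : r' [] = M.q0 := rfl
  have r'_concat : ∀ t m, r' (t ++ [m]) = dec m := by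
    intro t m; show (match (t ++ [m]).getLast? with | none => M.q0 | some m => dec m) = dec m
    rw [List.getLast?_concat]
  let T' : Set (List ℕ) := {t | ∀ u m, u ++ [m] <+: t →
    m = encv (dec m) ∧ dec m ∈ Y' u.length (r' u)}
  have hnilT : [] ∈ T' := by
    intro u m hp
    exact absurd (List.prefix_nil.mp hp) (by simp)
  have hpc : ∀ t m, t ++ [m] ∈ T' → t ∈ T' :=
    fun t m ht u m' hp => ht u m' (hp.trans (List.prefix_append t [m]))
  have hmemiff : ∀ t, t ∈ T' → ∀ m,
      (t ++ [m] ∈ T' ↔ (m = encv (dec m) ∧ dec m ∈ Y' t.length (r' t))) := by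
    intro t ht m
    constructor
    · intro h; exact h t m (List.prefix_refl _)
    · intro hc u m' hp
      rcases concat_prefix_concat hp with hp' | ⟨rfl, rfl⟩
      · exact ht u m' hp'
      · exact hc
  have hinv : ∀ t, t ∈ T' → r' t ∈ Sf M (St t.length) := by
    intro t
    induction t using List.reverseRecOn with
    | nil =>
      intro _
      rw [r'_nil]
      show M.q0 ∈ Sf M (St 0)
      rw [hS0]; rfl
    | append_singleton t m ih =>
      intro h
      have h2 := ((hmemiff t (hpc t m h)) m).mp h
      have h3 := hY'1 t.length (r' t) (ih (hpc t m h)) h2.2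
      rw [r'_concat]
      simpa using h3
  have htrans : ∀ t ∈ T', (M.δ (r' t) (w t.length)).Sat
      {q | ∃ n, t ++ [n] ∈ T' ∧ r' (t ++ [n]) = q} := by
    intro t ht
    have hset : {q | ∃ n, t ++ [n] ∈ T' ∧ r' (t ++ [n]) = q} = Y' t.length (r' t) := by
      ext q
      constructor
      · rintro ⟨n, hn, rfl⟩
        rw [r'_concat]
        exact ((hmemiff t ht n).mp hn).2
      · intro hq
        refine ⟨encv q, (hmemiff t ht _).mpr ?_, by rw [r'_concat, dec_enc]⟩
        rw [dec_enc]
        exact ⟨rfl, hq⟩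
    rw [hset]
    exact hY'2 _ _ (hinv t ht)
  refine ⟨⟨T', r', hnilT, r'_nil, hpc, htrans⟩, ?_⟩
  intro f hf0 hfs N
  by_contra hcon
  push_neg at hcon
  have hlen : ∀ k, (f k).length = k := by
    intro k; induction k with
    | zero => rw [hf0]; rfl
    | succ k ih =>
      obtain ⟨n, hn⟩ := (hfs k).2
      rw [hn]; simp [ih]
  have hlab : ∀ k, r' (f (k+1)) ∈ Y' k (r' (f k)) := by
    intro k
    obtain ⟨n, hn⟩ := (hfs k).2
    have h1 := (hfs (k+1)).1
    rw [hn] at h1 ⊢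
    rw [r'_concat]
    have h2 := ((hmemiff (f k) (hfs k).1 n).mp h1).2
    rw [hlen k] at h2
    exact h2
  have hq : ∀ k, r' (f k) ∈ Sf M (St k) := by
    intro k
    have h1 := hinv (f k) (hfs k).1
    rw [hlen] at h1
    exact h1
  obtain ⟨b, hbn, hbO⟩ := hbrk N
  have hchain : ∀ j, r' (f (b+1+j)) ∈ Of M (St (b+1+j)) := by
    intro j; induction j with
    | zero =>
      have hbs := (hstep' b).2 hbO
      show r' (f (b+1)) ∈ Of M (St (b+1))
      rw [hbs]
      exact ⟨hq (b+1), hcon (b+1) (by omega)⟩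
    | succ j ih =>
      have h3 := hY'3 (b+1+j) _ (hq _) ih
      exact h3 ⟨hlab (b+1+j), hcon _ (by omega)⟩
  obtain ⟨b', hb', hbO'⟩ := hbrk (b+1)
  have h4 := hchain (b' - (b+1))
  rw [(by omega : b+1+(b'-(b+1)) = b')] at h4
  rw [hbO'] at h4
  exact h4

end MH
namespace MH

open Classical in
/-- A König-style lemma: a sequence of finite nonempty "levels" of lists, each element of a
level extending an element of the previous level by one entry, contains an infinite chain. -/
theorem koenig {V : ℕ → Set (List ℕ)} {N : ℕ}
    (hfin : ∀ k, (V k).Finite)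
    (hlen : ∀ k, ∀ t ∈ V k, t.length = k)
    (hne : ∀ k, N ≤ k → (V k).Nonempty)
    (hpar : ∀ k, N ≤ k → ∀ s ∈ V (k+1), ∃ t ∈ V k, ∃ n, s = t ++ [n]) :
    ∃ g : ℕ → List ℕ, (∀ k, N ≤ k → g k ∈ V k) ∧
      (∀ k, N ≤ k → ∃ n, g (k+1) = g k ++ [n]) := by
  -- ancestors
  have anc : ∀ k, N ≤ k → ∀ j, ∀ s ∈ V (k+j), ∃ x ∈ V k, x <+: s := by
    intro k hk j
    induction j with
    | zero => exact fun s hs => ⟨s, hs, List.prefix_refl s⟩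
    | succ j ih =>
      intro s hs
      obtain ⟨t, ht, n, rfl⟩ := hpar (k+j) (by omega) s hs
      obtain ⟨x, hx, hpx⟩ := ih t ht
      exact ⟨x, hx, hpx.trans (List.prefix_append t [n])⟩
  -- the property of having a descendant at distance j
  set P : ℕ → List ℕ → ℕ → Prop := fun k x j => ∃ s ∈ V (k+j), x <+: s with hP
  have mono : ∀ k, N ≤ k → ∀ x ∈ V k, ∀ j j', j' ≤ j → P k x j → P k x j' := by
    intro k hk x hx j j' hle ⟨s, hs, hxs⟩
    have h1 : s ∈ V ((k+j') + (j - j')) := by rw [(by omega : (k+j') + (j-j') = k + j)]; exact hs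
    obtain ⟨x', hx', hx's⟩ := anc (k+j') (by omega) (j - j') s h1
    refine ⟨x', hx', ?_⟩
    have hlx : x.length ≤ x'.length := by
      rw [hlen k x hx, hlen (k+j') x' hx']; omega
    exact List.prefix_of_prefix_length_le hxs hx's hlx
  -- pigeonhole: in a finite set where each distance is realized, some element realizes all
  have pigeon : ∀ (k : ℕ), N ≤ k → ∀ (C : Set (List ℕ)), C.Finite → C ⊆ V k →
      (∀ j, ∃ y ∈ C, P k y j) → ∃ y ∈ C, ∀ j, P k y j := by
    intro k hk C hCfin hCV hall
    by_contra hcon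
    push_neg at hcon
    have hjf : ∀ y : List ℕ, ∃ j, y ∈ C → ¬ P k y j := by
      intro y
      by_cases hy : y ∈ C
      · obtain ⟨j, hj⟩ := hcon y hy
        exact ⟨j, fun _ => hj⟩
      · exact ⟨0, fun h => absurd h hy⟩
    choose jf hjf using hjf
    obtain ⟨J, hJ⟩ := (hCfin.image jf).bddAbove
    obtain ⟨y, hy, hPy⟩ := hall J
    exact hjf y hy (mono k hk y (hCV hy) J (jf y) (hJ (Set.mem_image_of_mem jf hy)) hPy)
  -- good elements
  set Good : ℕ → List ℕ → Prop := fun k x => x ∈ V k ∧ ∀ j, P k x j with hG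
  have good_N : ∃ x, Good N x := by
    obtain ⟨x, hx, hPx⟩ := pigeon N le_rfl (V N) (hfin N) subset_rfl
      (fun j => by
        obtain ⟨s, hs⟩ := hne (N+j) (by omega)
        obtain ⟨x, hx, hpx⟩ := anc N le_rfl j s hs
        exact ⟨x, hx, s, hs, hpx⟩)
    exact ⟨x, hx, hPx⟩
  have good_succ : ∀ k, N ≤ k → ∀ x, Good k x → ∃ y, Good (k+1) y ∧ ∃ n, y = x ++ [n] := by
    intro k hk x ⟨hxV, hxP⟩
    have hCfin : {y ∈ V (k+1) | x <+: y}.Finite := (hfin (k+1)).subset (Set.sep_subset _ _)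
    have hall : ∀ j, ∃ y ∈ {y ∈ V (k+1) | x <+: y}, P (k+1) y j := by
      intro j
      obtain ⟨s, hs, hxs⟩ := hxP (j+1)
      have hs' : s ∈ V ((k+1) + j) := by rw [(by omega : (k+1)+j = k+(j+1))]; exact hs
      obtain ⟨y, hy, hys⟩ := anc (k+1) (by omega) j s hs'
      have hxy : x <+: y := by
        refine List.prefix_of_prefix_length_le hxs hys ?_
        rw [hlen k x hxV, hlen (k+1) y hy]; omega
      exact ⟨y, ⟨hy, hxy⟩, s, hs', hys⟩
    obtain ⟨y, ⟨hyV, hxy⟩, hPy⟩ := pigeon (k+1) (by omega) _ hCfin (Set.sep_subset _ _) hall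
    refine ⟨y, ⟨hyV, hPy⟩, ?_⟩
    obtain ⟨d, rfl⟩ := hxy
    have hd : d.length = 1 := by
      have h1 := hlen k x hxV
      have h2 := hlen (k+1) _ hyV
      rw [List.length_append] at h2; omega
    obtain ⟨n, rfl⟩ := List.length_eq_one_iff.mp hd
    exact ⟨n, rfl⟩
  -- iterate
  obtain ⟨x0, hx0⟩ := good_N
  let Fn : {p : ℕ × List ℕ // N ≤ p.1 ∧ Good p.1 p.2} → {p : ℕ × List ℕ // N ≤ p.1 ∧ Good p.1 p.2} :=
    fun s => ⟨(s.val.1 + 1, Classical.choose (good_succ s.val.1 s.prop.1 s.val.2 s.prop.2)),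
      by omega, (Classical.choose_spec (good_succ s.val.1 s.prop.1 s.val.2 s.prop.2)).1⟩
  let gs : ℕ → {p : ℕ × List ℕ // N ≤ p.1 ∧ Good p.1 p.2} :=
    fun j => Fn^[j] ⟨(N, x0), le_rfl, hx0⟩
  have gs_succ : ∀ j, gs (j+1) = Fn (gs j) := fun j => Function.iterate_succ_apply' Fn j _
  have gs_fst : ∀ j, (gs j).val.1 = N + j := by
    intro j; induction j with
    | zero => rfl
    | succ j ih => rw [gs_succ]; show (gs j).val.1 + 1 = N + (j+1); omega
  have gs_chain : ∀ j, ∃ n, (gs (j+1)).val.2 = (gs j).val.2 ++ [n] := by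
    intro j
    rw [gs_succ]
    exact (Classical.choose_spec (good_succ (gs j).val.1 (gs j).prop.1 (gs j).val.2
      (gs j).prop.2)).2
  refine ⟨fun k => (gs (k - N)).val.2, ?_, ?_⟩
  · intro k hk
    have h1 := ((gs (k-N)).prop.2).1
    rw [gs_fst] at h1
    rw [(by omega : N + (k - N) = k)] at h1
    exact h1
  · intro k hk
    show ∃ n, (gs (k + 1 - N)).val.2 = _
    rw [(by omega : k + 1 - N = (k - N) + 1)]
    exact gs_chain (k - N)

end MH
namespace MH

section Complete

variable {A : Type} {M : ABA A} {w : ℕ → A} (ρ : M.Run w)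

/-- A state labels some node at level `k`. -/
def SLp (k : ℕ) (q : M.Q) : Prop := ∃ t, t ∈ ρ.T ∧ t.length = k ∧ ρ.r t = q

/-- A state labels some child of node `t`. -/
def CLp (t : List ℕ) (q : M.Q) : Prop := ∃ n, t ++ [n] ∈ ρ.T ∧ ρ.r (t ++ [n]) = q

open Classical in
/-- A chosen node at level `k` with label `q`. -/
noncomputable def σn (k : ℕ) (q : M.Q) : List ℕ :=
  if h : SLp ρ k q then h.choose else []

theorem σn_spec {k : ℕ} {q : M.Q} (h : SLp ρ k q) :
    σn ρ k q ∈ ρ.T ∧ (σn ρ k q).length = k ∧ ρ.r (σn ρ k q) = q := by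
  rw [σn, dif_pos h]
  exact h.choose_spec

open Classical in
/-- A chosen child of `t` with label `q`. -/
noncomputable def cn (t : List ℕ) (q : M.Q) : List ℕ :=
  if h : CLp ρ t q then t ++ [h.choose] else []

theorem cn_spec {t : List ℕ} {q : M.Q} (h : CLp ρ t q) :
    cn ρ t q ∈ ρ.T ∧ (∃ n, cn ρ t q = t ++ [n]) ∧ ρ.r (cn ρ t q) = q := by
  rw [cn, dif_pos h]
  exact ⟨h.choose_spec.1, ⟨h.choose, rfl⟩, h.choose_spec.2⟩

open Classical in
/-- A chosen element of `W` with label `q`. -/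
noncomputable def vchn (W : Set (List ℕ)) (q : M.Q) : List ℕ :=
  if h : ∃ t, t ∈ W ∧ ρ.r t = q then h.choose else []

theorem vchn_spec {W : Set (List ℕ)} {q : M.Q} (h : ∃ t, t ∈ W ∧ ρ.r t = q) :
    vchn ρ W q ∈ W ∧ ρ.r (vchn ρ W q) = q := by
  rw [vchn, dif_pos h]
  exact h.choose_spec

open Classical in
/-- One step of the construction of the sets of owing nodes. -/
noncomputable def VsStep (k : ℕ) (W : Set (List ℕ)) : Set (List ℕ) :=
  if W = ∅ then {s | ∃ q, SLp ρ (k+1) q ∧ q ∉ M.F ∧ s = σn ρ (k+1) q}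
  else {s | ∃ q, (∃ t, t ∈ W ∧ ρ.r t = q) ∧
    ∃ q', CLp ρ (vchn ρ W q) q' ∧ q' ∉ M.F ∧ s = cn ρ (vchn ρ W q) q'}

/-- The sets of owing nodes. -/
noncomputable def Vs : ℕ → Set (List ℕ) := fun k =>
  Nat.rec {t | t = [] ∧ M.q0 ∉ M.F} (fun k W => VsStep ρ k W) k

theorem Vs_succ (k : ℕ) : Vs ρ (k+1) = VsStep ρ k (Vs ρ k) := rfl

/-- The obligation sets. -/
noncomputable def Os (k : ℕ) : Set M.Q := ρ.r '' Vs ρ k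

/-- The level label sets. -/
def Ss (k : ℕ) : Set M.Q := {q | SLp ρ k q}

theorem Vs_mem : ∀ k, ∀ t ∈ Vs ρ k, t ∈ ρ.T ∧ t.length = k ∧ ρ.r t ∉ M.F := by
  intro k
  induction k with
  | zero =>
    rintro t ⟨rfl, hF⟩
    exact ⟨ρ.root_mem, rfl, by rw [ρ.root_label]; exact hF⟩
  | succ k ih =>
    intro t ht
    rw [Vs_succ, VsStep] at ht
    split_ifs at ht with hW
    · obtain ⟨q, hq, hqF, rfl⟩ := ht
      obtain ⟨h1, h2, h3⟩ := σn_spec ρ hq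
      exact ⟨h1, h2, by rw [h3]; exact hqF⟩
    · obtain ⟨q, hq, q', hq', hq'F, rfl⟩ := ht
      have hv := vchn_spec ρ hq
      have hc := cn_spec ρ hq'
      obtain ⟨n, hn⟩ := hc.2.1
      refine ⟨hc.1, ?_, by rw [hc.2.2]; exact hq'F⟩
      rw [hn, List.length_append, (ih _ hv.1).2.1]
      rfl

theorem Ss0 : Ss ρ 0 = {M.q0} := by
  ext q
  constructor
  · rintro ⟨t, hT, hlen, rfl⟩
    rw [List.length_eq_zero_iff.mp hlen, ρ.root_label]
    rfl
  · rintro rfl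
    exact ⟨[], ρ.root_mem, rfl, ρ.root_label⟩

theorem Os0 : Os ρ 0 = {M.q0} \ M.F := by
  ext q
  constructor
  · rintro ⟨t, ⟨rfl, hF⟩, rfl⟩
    rw [ρ.root_label]
    exact ⟨rfl, hF⟩
  · rintro ⟨hq, hF⟩
    rw [Set.mem_singleton_iff] at hq
    subst hq
    exact ⟨[], ⟨rfl, hF⟩, ρ.root_label⟩

theorem Os_subset_Ss (k : ℕ) : Os ρ k ⊆ Ss ρ k := by
  rintro q ⟨t, ht, rfl⟩
  obtain ⟨h1, h2, -⟩ := Vs_mem ρ k t ht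
  exact ⟨t, h1, h2, rfl⟩

theorem Os_succ_empty {k : ℕ} (hW : Os ρ k = ∅) : Os ρ (k+1) = Ss ρ (k+1) \ M.F := by
  have hV : Vs ρ k = ∅ := by rwa [Os, Set.image_eq_empty] at hW
  rw [Os, Vs_succ, VsStep, if_pos hV]
  ext q
  constructor
  · rintro ⟨s, ⟨q', hq', hq'F, rfl⟩, rfl⟩
    rw [(σn_spec ρ hq').2.2]
    exact ⟨hq', hq'F⟩
  · rintro ⟨hq, hqF⟩
    exact ⟨σn ρ (k+1) q, ⟨q, hq, hqF, rfl⟩, (σn_spec ρ hq).2.2⟩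

theorem Os_succ_cover {k : ℕ} {q : M.Q} (hq : q ∈ Os ρ k) :
    {q' | CLp ρ (vchn ρ (Vs ρ k) q) q'} \ M.F ⊆ Os ρ (k+1) := by
  have hqe : ∃ t, t ∈ Vs ρ k ∧ ρ.r t = q := Set.mem_image _ _ _ |>.mp hq
  have hV : Vs ρ k ≠ ∅ := by
    intro h
    rw [h] at hqe
    exact absurd hqe.choose_spec.1 (Set.notMem_empty _)
  rintro q' ⟨hq', hq'F⟩
  refine ⟨cn ρ (vchn ρ (Vs ρ k) q) q', ?_, (cn_spec ρ hq').2.2⟩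
  rw [Vs_succ, VsStep, if_neg hV]
  exact ⟨q, hqe, q', hq', hq'F, rfl⟩

theorem mhStep (k : ℕ) :
    Step M (w k) (enc M (Ss ρ k) (Os ρ k)) (enc M (Ss ρ (k+1)) (Os ρ (k+1))) := by
  constructor
  · intro q hq
    rw [Sf_enc M (Os_subset_Ss ρ k)] at hq
    by_cases hqO : q ∈ Os ρ k
    · have hv := vchn_spec ρ (Set.mem_image _ _ _ |>.mp hqO)
      have hm := Vs_mem ρ k _ hv.1
      refine ⟨{q' | CLp ρ (vchn ρ (Vs ρ k) q) q'}, ?_, ?_, ?_⟩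
      · rintro q' ⟨n, hn, rfl⟩
        rw [Sf_enc M (Os_subset_Ss ρ (k+1))]
        exact ⟨_, hn, by rw [List.length_append, hm.2.1]; rfl, rfl⟩
      · have h2 := ρ.trans _ hm.1
        rw [hm.2.1, hv.2] at h2
        exact h2
      · intro _
        rw [Of_enc]
        exact Os_succ_cover ρ hqO
    · have hs := σn_spec ρ (hq : SLp ρ k q)
      refine ⟨{q' | CLp ρ (σn ρ k q) q'}, ?_, ?_, ?_⟩
      · rintro q' ⟨n, hn, rfl⟩
        rw [Sf_enc M (Os_subset_Ss ρ (k+1))]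
        exact ⟨_, hn, by rw [List.length_append, hs.2.1]; rfl, rfl⟩
      · have h2 := ρ.trans _ hs.1
        rw [hs.2.1, hs.2.2] at h2
        exact h2
      · intro hO
        rw [Of_enc] at hO
        exact absurd hO hqO
  · intro hO
    rw [Of_enc] at hO
    rw [Of_enc, Sf_enc M (Os_subset_Ss ρ (k+1))]
    exact Os_succ_empty ρ hO

theorem prefix_mem : ∀ t ∈ ρ.T, ∀ s, s <+: t → s ∈ ρ.T := by
  intro t
  induction t using List.reverseRecOn with
  | nil =>
    intro _ s hs
    rw [List.prefix_nil.mp hs]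
    exact ρ.root_mem
  | append_singleton t m ih =>
    intro ht s hs
    rcases s.eq_nil_or_concat with rfl | ⟨s', a, rfl⟩
    · exact ρ.root_mem
    · rw [List.concat_eq_append] at hs ⊢
      rcases concat_prefix_concat hs with h | ⟨rfl, rfl⟩
      · exact ih (ρ.prefix_closed t m ht) _ h
      · exact ht

theorem mhBrk (hacc : ρ.Accepting) : ∀ N, ∃ k ≥ N, Os ρ k = ∅ := by
  haveI : Finite M.Q := @Finite.of_fintype _ M.fin
  intro N
  by_contra hcon
  push_neg at hcon
  have hne : ∀ k, N ≤ k → (Vs ρ k).Nonempty :=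
    fun k hk => Set.Nonempty.of_image (hcon k hk)
  have hVne : ∀ k, N ≤ k → Vs ρ k ≠ ∅ :=
    fun k hk => Set.nonempty_iff_ne_empty.mp (hne k hk)
  have hfin : ∀ k, (Vs ρ k).Finite := by
    intro k
    cases k with
    | zero =>
      apply (Set.finite_singleton ([] : List ℕ)).subset
      rintro t ⟨rfl, -⟩
      rfl
    | succ k =>
      rw [Vs_succ, VsStep]
      split_ifs with hV
      · apply (Set.finite_range (σn ρ (k+1))).subset
        rintro s ⟨q, -, -, rfl⟩
        exact ⟨q, rfl⟩
      · apply (Set.finite_range (fun p : M.Q × M.Q => cn ρ (vchn ρ (Vs ρ k) p.1) p.2)).subset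
        rintro s ⟨q, -, q', -, -, rfl⟩
        exact ⟨(q, q'), rfl⟩
  have hlen : ∀ k, ∀ t ∈ Vs ρ k, t.length = k := fun k t ht => (Vs_mem ρ k t ht).2.1
  have hpar : ∀ k, N ≤ k → ∀ s ∈ Vs ρ (k+1), ∃ t ∈ Vs ρ k, ∃ n, s = t ++ [n] := by
    intro k hk s hs
    rw [Vs_succ, VsStep, if_neg (hVne k hk)] at hs
    obtain ⟨q, hq, q', hq', -, rfl⟩ := hs
    obtain ⟨n, hn⟩ := (cn_spec ρ hq').2.1
    exact ⟨vchn ρ (Vs ρ k) q, (vchn_spec ρ hq).1, n, hn⟩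
  obtain ⟨g, hg1, hg2⟩ := koenig hfin hlen hne hpar
  set f : ℕ → List ℕ := fun k => (g (max k N)).take k with hf
  have hfN : ∀ k, N ≤ k → f k = g k := by
    intro k hk
    show (g (max k N)).take k = g k
    rw [max_eq_left hk]
    have h1 : (g k).take (g k).length = g k := List.take_length
    rwa [hlen k (g k) (hg1 k hk)] at h1
  have hmemT : ∀ k, f k ∈ ρ.T := fun k =>
    prefix_mem ρ (g (max k N)) (Vs_mem ρ _ _ (hg1 _ (le_max_right k N))).1 _
      (List.take_prefix k _)
  have hsucc : ∀ k, ∃ n, f (k+1) = f k ++ [n] := by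
    intro k
    rcases le_or_gt (k+1) N with hk | hk
    · show ∃ n, (g (max (k+1) N)).take (k+1) = (g (max k N)).take k ++ [n]
      rw [max_eq_right hk, max_eq_right (by omega : k ≤ N)]
      have hklt : k < (g N).length := by rw [hlen N _ (hg1 N le_rfl)]; omega
      refine ⟨(g N)[k], ?_⟩
      rw [List.take_succ, List.getElem?_eq_getElem hklt]
      rfl
    · have hk' : N ≤ k := by omega
      obtain ⟨n, hn⟩ := hg2 k hk'
      exact ⟨n, by rw [hfN (k+1) (by omega), hfN k hk', hn]⟩
  obtain ⟨k, hkN, hkF⟩ := hacc f (by show (g (max 0 N)).take 0 = []; rfl)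
    (fun k => ⟨hmemT k, hsucc k⟩) N
  rw [hfN k hkN] at hkF
  exact (Vs_mem ρ k (g k) (hg1 k hkN)).2.2 hkF

end Complete

theorem mh_complete {A : Type} (M : ABA A) (w : ℕ → A) (h : w ∈ M.Lang) :
    w ∈ (MHaut M).Lang := by
  classical
  obtain ⟨ρ, hacc⟩ := h
  refine ⟨⟨{t | ∀ m ∈ t, m = 0},
    fun t => enc M (Ss ρ t.length) (Os ρ t.length), ?_, ?_, ?_, ?_⟩, ?_⟩
  · intro m hm
    simp at hm
  · show enc M (Ss ρ ([] : List ℕ).length) (Os ρ ([] : List ℕ).length) = _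
    rw [show ([] : List ℕ).length = 0 from rfl, Ss0, Os0]
    rfl
  · intro t n h m hm
    exact h m (by simp [hm])
  · intro t ht
    refine (mh_sat_iff M _ _ _).mpr ?_
    refine ⟨enc M (Ss ρ (t.length+1)) (Os ρ (t.length+1)), ⟨0, ?_, ?_⟩, mhStep ρ t.length⟩
    · intro m hm
      rcases List.mem_append.mp hm with h1 | h1
      · exact ht m h1
      · simpa using h1
    · show enc M (Ss ρ (t ++ [0]).length) (Os ρ (t ++ [0]).length) = _
      rw [List.length_append]
      rfl
  · intro f hf0 hfs N
    have hlenf : ∀ k, (f k).length = k := by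
      intro k
      induction k with
      | zero => rw [hf0]; rfl
      | succ k ih =>
        obtain ⟨n, hn⟩ := (hfs k).2
        rw [hn, List.length_append, ih]
        rfl
    obtain ⟨k, hk, hOk⟩ := mhBrk ρ hacc N
    refine ⟨k, hk, ?_⟩
    show Of M (enc M (Ss ρ (f k).length) (Os ρ (f k).length)) = ∅
    rw [hlenf k, Of_enc, hOk]

end MH

/-- **Miyano–Hayashi dealternation**: for every alternating Büchi automaton `M` with `n`
states there is a nondeterministic Büchi automaton `B` with at most `3 ^ n` states
accepting the same ω-language. -/
theorem dealternation {A : Type} (M : ABA A) :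
    ∃ B : ABA A, B.IsNondet ∧
      (@Fintype.card B.Q B.fin) ≤ 3 ^ (@Fintype.card M.Q M.fin) ∧
      B.Lang = M.Lang := by
  refine ⟨MH.MHaut M, MH.mh_nondet M, MH.mh_card M, ?_⟩
  ext w
  exact ⟨fun h => MH.mh_sound M w h, fun h => MH.mh_complete M w h⟩
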